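/- The set of pairs of integers (p, q) with p ≥ 3, q ≥ 3, K(p,q) = 1/p + 1/q − 1/2 < 0, such that (p = 3 or 1/(p−1) + 1/q − 1/2 ≥ 0) and (q = 3 or 1/p + 1/(q−1) − 1/2 ≥ 0), is exactly the four-element set {(3,7), (7,3), (4,5), (5,4)}. In particular, there are exactly 4 geometry-minimal hyperbolic types of periodic two-dimensional tilings of Dress complexity 1. -/

import Mathlib

lemma aux_bound (p q : ℤ) (hp : 3 ≤ p) (hq : 3 ≤ q)
    (h : 0 ≤ 1 / ((p : ℚ) - 1) + 1 / (q : ℚ) - 1 / 2) : p ≤ 7 := by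
  by_contra hlt
  push_neg at hlt
  have h8 : (8 : ℚ) ≤ (p : ℚ) := by exact_mod_cast hlt
  have hq' : (3 : ℚ) ≤ (q : ℚ) := by exact_mod_cast hq
  have h1 : 1 / ((p : ℚ) - 1) ≤ 1 / 7 := by
    apply one_div_le_one_div_of_le <;> linarith
  have h2 : 1 / (q : ℚ) ≤ 1 / 3 := by
    apply one_div_le_one_div_of_le <;> linarith
  linarith

theorem geometry_minimal_hyperbolic_pairs_complexity_one :
    {pq : ℤ × ℤ | 3 ≤ pq.1 ∧ 3 ≤ pq.2 ∧
        1 / (pq.1 : ℚ) + 1 / (pq.2 : ℚ) - 1 / 2 < 0 ∧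
        (pq.1 = 3 ∨ 0 ≤ 1 / ((pq.1 : ℚ) - 1) + 1 / (pq.2 : ℚ) - 1 / 2) ∧
        (pq.2 = 3 ∨ 0 ≤ 1 / (pq.1 : ℚ) + 1 / ((pq.2 : ℚ) - 1) - 1 / 2)} =
      ({(3, 7), (7, 3), (4, 5), (5, 4)} : Set (ℤ × ℤ)) ∧
    {pq : ℤ × ℤ | 3 ≤ pq.1 ∧ 3 ≤ pq.2 ∧
        1 / (pq.1 : ℚ) + 1 / (pq.2 : ℚ) - 1 / 2 < 0 ∧
        (pq.1 = 3 ∨ 0 ≤ 1 / ((pq.1 : ℚ) - 1) + 1 / (pq.2 : ℚ) - 1 / 2) ∧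
        (pq.2 = 3 ∨ 0 ≤ 1 / (pq.1 : ℚ) + 1 / ((pq.2 : ℚ) - 1) - 1 / 2)}.ncard = 4 := by
  have hset : {pq : ℤ × ℤ | 3 ≤ pq.1 ∧ 3 ≤ pq.2 ∧
        1 / (pq.1 : ℚ) + 1 / (pq.2 : ℚ) - 1 / 2 < 0 ∧
        (pq.1 = 3 ∨ 0 ≤ 1 / ((pq.1 : ℚ) - 1) + 1 / (pq.2 : ℚ) - 1 / 2) ∧
        (pq.2 = 3 ∨ 0 ≤ 1 / (pq.1 : ℚ) + 1 / ((pq.2 : ℚ) - 1) - 1 / 2)} =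
      ({(3, 7), (7, 3), (4, 5), (5, 4)} : Set (ℤ × ℤ)) := by
    ext ⟨p, q⟩
    simp only [Set.mem_setOf_eq, Set.mem_insert_iff, Set.mem_singleton_iff, Prod.mk.injEq]
    constructor
    · rintro ⟨hp, hq, hK, hp', hq'⟩
      have hple : p ≤ 7 := by
        rcases hp' with h | h
        · omega
        · exact aux_bound p q hp hq h
      have hqle : q ≤ 7 := by
        rcases hq' with h | h
        · omega
        · have : 0 ≤ 1 / ((q : ℚ) - 1) + 1 / (p : ℚ) - 1 / 2 := by linarith
          exact aux_bound q p hq hp this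
      interval_cases p <;> interval_cases q <;>
        (revert hK hp' hq'; norm_num)
    · rintro (⟨rfl, rfl⟩ | ⟨rfl, rfl⟩ | ⟨rfl, rfl⟩ | ⟨rfl, rfl⟩) <;> norm_num
  refine ⟨hset, ?_⟩
  rw [hset]
  rw [show ({(3, 7), (7, 3), (4, 5), (5, 4)} : Set (ℤ × ℤ)) =
      (({(3, 7), (7, 3), (4, 5), (5, 4)} : Finset (ℤ × ℤ)) : Set (ℤ × ℤ)) by simp]
  rw [Set.ncard_coe_finset]
  decide
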